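/- Let 0 ≤ β < 1. There exist constants C_β, y_β, c_β > 0 such that for all reals x, y with y ≥ y_β and y ≤ c_β x, Σ_{n ≤ x, P⁺(n) ≤ y} n^{-β} ≤ C_β x^{1-β} e^{-(1/2)(log x / log y)}, where P⁺(n) denotes the largest prime factor of n. -/

import Mathlib

open Finset

lemma rpow_mvt {a b : ℝ} (ha : 0 < a) (hab : a < b) (r : ℝ) :
    ∃ c, a < c ∧ c < b ∧ b ^ r - a ^ r = r * c ^ (r - 1) * (b - a) := by
  obtain ⟨c, hc, hc'⟩ := exists_hasDerivAt_eq_slope (fun t => t ^ r)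
      (fun t => r * t ^ (r - 1)) hab
      (by
        apply ContinuousOn.rpow_const continuousOn_id
        intro t ht
        exact Or.inl (lt_of_lt_of_le ha ht.1).ne')
      (fun t ht => Real.hasDerivAt_rpow_const (Or.inl (ha.trans ht.1).ne'))
  refine ⟨c, hc.1, hc.2, ?_⟩
  rw [eq_div_iff (by linarith : b - a ≠ 0)] at hc'
  rw [← hc']

-- F2
lemma F2 {β a : ℝ} (hβ0 : 0 ≤ β) (ha : 1 ≤ a) :
    a ^ (-β) - (a + 1) ^ (-β) ≤ β * a ^ (-(1 + β)) := by
  have ha0 : (0:ℝ) < a := by linarith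
  obtain ⟨c, hc1, hc2, hc3⟩ := rpow_mvt ha0 (by linarith : a < a + 1) (-β)
  have hcpos : 0 < c := lt_trans ha0 hc1
  have : c ^ (-β - 1) ≤ a ^ (-β - 1) :=
    Real.rpow_le_rpow_of_nonpos ha0 hc1.le (by linarith)
  have h4 : a ^ (-β) - (a + 1) ^ (-β) = β * c ^ (-β - 1) := by
    have := hc3; nlinarith [hc3]
  rw [h4]
  have : β * c ^ (-β - 1) ≤ β * a ^ (-β - 1) := by
    apply mul_le_mul_of_nonneg_left this hβ0
  calc β * c ^ (-β-1) ≤ β * a ^ (-β-1) := this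
    _ = β * a ^ (-(1+β)) := by ring_nf

-- F1
lemma F1 {s a : ℝ} (hs0 : 0 < s) (hs1 : s < 1) (ha : 1 ≤ a) :
    (1 - s) * (a + 1) ^ (-s) ≤ (a + 1) ^ (1 - s) - a ^ (1 - s) := by
  have ha0 : (0:ℝ) < a := by linarith
  obtain ⟨c, hc1, hc2, hc3⟩ := rpow_mvt ha0 (by linarith : a < a + 1) (1 - s)
  have hcpos : 0 < c := lt_trans ha0 hc1
  have hle : (a + 1) ^ ((1-s) - 1) ≤ c ^ ((1-s) - 1) :=
    Real.rpow_le_rpow_of_nonpos hcpos hc2.le (by linarith)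
  have h4 : (a + 1) ^ (1 - s) - a ^ (1 - s) = (1 - s) * c ^ (1 - s - 1) := by
    rw [hc3]; ring
  rw [h4]
  have he : (1:ℝ) - s - 1 = -s := by ring
  rw [he] at hle ⊢
  exact mul_le_mul_of_nonneg_left hle (by linarith)

-- sum of m^{-s}
lemma sum_rpow_le {s : ℝ} (hs0 : 0 < s) (hs1 : s < 1) (N : ℕ) :
    ∑ m ∈ Icc 1 N, (m : ℝ) ^ (-s) ≤ 1 + (N : ℝ) ^ (1 - s) / (1 - s) := by
  induction N with
  | zero => simp [Real.zero_rpow (by linarith : (1:ℝ) - s ≠ 0)]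
  | succ N ih =>
    rw [Finset.sum_Icc_succ_top (by norm_num)]
    have h1s : (0:ℝ) < 1 - s := by linarith
    rcases Nat.eq_zero_or_pos N with h | h
    · subst h
      have e0 : (Icc 1 0 : Finset ℕ) = ∅ := by simp
      rw [e0, sum_empty]
      norm_num [Real.one_rpow]
      have : (0:ℝ) < 1/(1-s) := by positivity
      linarith
    · have hN1 : (1:ℝ) ≤ (N:ℝ) := by exact_mod_cast h
      have hF := F1 hs0 hs1 hN1
      have hcast : ((N+1 : ℕ):ℝ) = (N:ℝ) + 1 := by push_cast; ring
      rw [hcast]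
      have key : ((N:ℝ)+1) ^ (-s) ≤ (((N:ℝ)+1)^(1-s) - (N:ℝ)^(1-s))/(1-s) := by
        rw [le_div_iff₀ h1s]
        nlinarith [hF]
      have : (((N:ℝ)+1)^(1-s) - (N:ℝ)^(1-s))/(1-s)
          = ((N:ℝ)+1)^(1-s)/(1-s) - (N:ℝ)^(1-s)/(1-s) := by ring
      linarith [ih, key, this.le]

lemma geom_Icc_le {r : ℝ} (h0 : 0 ≤ r) (h1 : r < 1) (N : ℕ) :
    ∑ ν ∈ Icc 1 N, r ^ ν ≤ r / (1 - r) := by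
  have hIcc : Icc 1 N = Ico 1 (N+1) := by
    ext; simp [Nat.lt_succ_iff]
  rw [hIcc]
  calc ∑ ν ∈ Ico 1 (N+1), r ^ ν ≤ r ^ 1 / (1 - r) := geom_sum_Ico_le_of_lt_one h0 h1
    _ = r / (1 - r) := by rw [pow_one]

lemma chebyshev (n : ℕ) : ∑ p ∈ n.succ.primesBelow, Real.log p ≤ n * Real.log 4 := by
  have h1 : ∑ p ∈ n.succ.primesBelow, Real.log p = Real.log (primorial n) := by
    rw [primorial]
    push_cast
    rw [Real.log_prod]
    · rfl
    · intro p hp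
      simp only [mem_filter, Finset.mem_range] at hp
      exact_mod_cast hp.2.pos.ne'
  rw [h1]
  calc Real.log (primorial n) ≤ Real.log ((4:ℕ) ^ n) := by
        apply Real.log_le_log (by exact_mod_cast primorial_pos n)
        exact_mod_cast primorial_le_4_pow n
    _ = n * Real.log 4 := by
        push_cast
        rw [Real.log_pow]

lemma primesBelow_mono {a b : ℕ} (h : a ≤ b) : a.primesBelow ⊆ b.primesBelow := by
  intro p hp
  rw [Nat.mem_primesBelow] at *
  exact ⟨lt_of_lt_of_le hp.1 h, hp.2⟩

lemma mertens_aux : ∀ k n : ℕ, n < 2^(k+1) →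
    ∑ p ∈ (n+1).primesBelow, Real.log p / p ≤ (k+1) * (4*Real.log 2) := by
  intro k
  induction k with
  | zero =>
    intro n hn
    interval_cases n
    · have : (1:ℕ).primesBelow = ∅ := rfl
      simp [this]
      positivity
    · have : (2:ℕ).primesBelow = ∅ := by decide
      simp [this]
      positivity
  | succ k ih =>
    intro n hn
    rcases Nat.eq_zero_or_pos n with h0 | h0
    · subst h0
      have : (1:ℕ).primesBelow = ∅ := rfl
      simp [this]
      positivity
    set m := n / 2 with hm
    have hmlt : m < 2^(k+1) := by
      have : n < 2^(k+1) * 2 := by rw [pow_succ] at hn; omega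
      omega
    have hsub : (m+1).primesBelow ⊆ (n+1).primesBelow :=
      primesBelow_mono (by omega)
    have hsplit := Finset.sum_sdiff (f := fun p : ℕ => Real.log p / p) hsub
    have hT := ih m hmlt
    have hS : ∑ p ∈ (n+1).primesBelow \ (m+1).primesBelow, Real.log p / p ≤ 4 * Real.log 2 := by
      have hn0 : (0:ℝ) < n := by exact_mod_cast h0
      calc ∑ p ∈ (n+1).primesBelow \ (m+1).primesBelow, Real.log p / p
          ≤ ∑ p ∈ (n+1).primesBelow \ (m+1).primesBelow, 2/n * Real.log p := by
            apply Finset.sum_le_sum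
            intro p hp
            rw [Finset.mem_sdiff, Nat.mem_primesBelow] at hp
            have hp2 : 2 ≤ p := hp.1.2.two_le
            have hpn : ¬ (p < m + 1) := fun hc => hp.2 (Nat.mem_primesBelow.mpr ⟨hc, hp.1.2⟩)
            have h2p : n ≤ 2 * p := by omega
            have hlogp : 0 ≤ Real.log p := Real.log_nonneg (by
              have : (2:ℝ) ≤ p := by exact_mod_cast hp2
              linarith)
            have hppos : (0:ℝ) < p := by positivity
            rw [div_eq_mul_inv, mul_comm (2/(n:ℝ)) _]
            apply mul_le_mul_of_nonneg_left _ hlogp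
            rw [inv_eq_one_div, div_le_div_iff₀ hppos hn0]
            have : (n:ℝ) ≤ 2 * p := by exact_mod_cast h2p
            linarith
        _ = 2/n * ∑ p ∈ (n+1).primesBelow \ (m+1).primesBelow, Real.log p := by
            rw [Finset.mul_sum]
        _ ≤ 2/n * ∑ p ∈ (n+1).primesBelow, Real.log p := by
            apply mul_le_mul_of_nonneg_left _ (by positivity)
            apply Finset.sum_le_sum_of_subset_of_nonneg (Finset.sdiff_subset)
            intro p hp _
            refine Real.log_nonneg ?_
            have : (2:ℝ) ≤ p := by exact_mod_cast (Nat.prime_of_mem_primesBelow hp).two_le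
            linarith
        _ ≤ 2/n * (n * Real.log 4) := by
            apply mul_le_mul_of_nonneg_left (chebyshev n) (by positivity)
        _ = 2 * Real.log 4 := by field_simp
        _ = 4 * Real.log 2 := by
            rw [show (4:ℝ) = 2^2 by norm_num, Real.log_pow]
            push_cast; ring
    rw [← hsplit]
    push_cast
    nlinarith [hT, hS]

lemma mertens {n : ℕ} (hn : 1 ≤ n) :
    ∑ p ∈ (n+1).primesBelow, Real.log p / p ≤ 4 * Real.log n + 4 * Real.log 2 := by
  set k := Nat.log 2 n with hk
  have h1 : n < 2 ^ (k+1) := Nat.lt_pow_succ_log_self (by norm_num) n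
  have h2 := mertens_aux k n h1
  have h3 : (k : ℝ) * Real.log 2 ≤ Real.log n := by
    have hp : (2:ℝ)^k ≤ n := by exact_mod_cast Nat.pow_log_le_self 2 (by omega)
    calc (k : ℝ) * Real.log 2 = Real.log ((2:ℝ)^k) := by rw [Real.log_pow]
      _ ≤ Real.log n := Real.log_le_log (by positivity) hp
  have hl2 : 0 < Real.log 2 := Real.log_pos (by norm_num)
  nlinarith [h2, h3, hl2]

lemma sum_card_swap {S T : Finset ℕ} (P : ℕ → ℕ → Prop) [∀ ν n, Decidable (P ν n)] :
    ∑ n ∈ S, (T.filter (fun ν => P ν n)).card = ∑ ν ∈ T, (S.filter (fun n => P ν n)).card := by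
  simp only [Finset.card_filter]
  rw [Finset.sum_comm]

lemma abel_swap {N : ℕ} {S : Finset ℕ} (hS : S ⊆ Icc 1 N) (g : ℕ → ℝ) :
    ∑ n ∈ S, ∑ m ∈ Ico n N, g m
      = ∑ m ∈ Ico 1 N, ((S.filter (fun n => n ≤ m)).card : ℝ) * g m := by
  have h1 : ∀ n ∈ S, ∑ m ∈ Ico n N, g m = ∑ m ∈ Ico 1 N, if n ≤ m then g m else 0 := by
    intro n hn
    have hn1 : 1 ≤ n := (mem_Icc.mp (hS hn)).1
    have : Ico n N = (Ico 1 N).filter (fun m => n ≤ m) := by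
      ext m
      simp only [mem_Ico, mem_filter]
      omega
    rw [this, Finset.sum_filter]
  rw [Finset.sum_congr rfl h1, Finset.sum_comm]
  apply Finset.sum_congr rfl
  intro m _
  rw [← Finset.sum_filter, Finset.sum_const, nsmul_eq_mul]

lemma factorization_le_card {p n N : ℕ} (hp : p.Prime) (hn : 1 ≤ n) (hnN : n ≤ N) :
    n.factorization p ≤ ((Icc 1 N).filter (fun ν => p ^ ν ∣ n)).card := by
  have hflt : n.factorization p < n := Nat.factorization_lt p (by omega)
  have hsub : Icc 1 (n.factorization p) ⊆ (Icc 1 N).filter (fun ν => p ^ ν ∣ n) := by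
    intro ν hν
    rw [mem_Icc] at hν
    rw [mem_filter, mem_Icc]
    exact ⟨⟨hν.1, by omega⟩,
      (Nat.Prime.pow_dvd_iff_le_factorization hp (by omega)).mpr hν.2⟩
  calc n.factorization p = (Icc 1 (n.factorization p)).card := by simp [Nat.card_Icc]
    _ ≤ _ := Finset.card_le_card hsub

lemma log_diff_le {a : ℕ} (ha : 1 ≤ a) : ∀ b : ℕ, a ≤ b →
    Real.log b - Real.log a ≤ ∑ m ∈ Ico a b, ((m:ℝ))⁻¹ := by
  intro b hab
  induction b, hab using Nat.le_induction with
  | base => simp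
  | succ b hb ih =>
    rw [Finset.sum_Ico_succ_top hb]
    have hb0 : (0:ℝ) < b := by exact_mod_cast (by omega : 0 < b)
    have key : Real.log (b+1 : ℕ) - Real.log b ≤ ((b:ℝ))⁻¹ := by
      have h1 : Real.log (b+1 : ℕ) - Real.log b = Real.log (((b:ℝ)+1)/b) := by
        rw [Real.log_div (by positivity) (by positivity)]
        push_cast; ring
      rw [h1]
      calc Real.log (((b:ℝ)+1)/b) ≤ ((b:ℝ)+1)/b - 1 :=
            Real.log_le_sub_one_of_pos (by positivity)
        _ = ((b:ℝ))⁻¹ := by field_simp; ring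
    linarith [ih]

lemma log_eq_sum {n : ℕ} (hn : n ≠ 0) :
    Real.log n = ∑ p ∈ n.primeFactors, (n.factorization p : ℝ) * Real.log p := by
  conv_lhs => rw [← Nat.factorization_prod_pow_eq_self hn]
  rw [Finsupp.prod, Nat.support_factorization]
  push_cast
  rw [Real.log_prod]
  · apply Finset.sum_congr rfl
    intro p hp
    rw [Real.log_pow]
  · intro p hp
    have hp2 := (Nat.prime_of_mem_primeFactors hp).pos
    positivity

lemma r_bound {p : ℕ} (hp : 2 ≤ p) {σ : ℝ} (hσ1 : 3/4 ≤ σ) (hσ2 : σ ≤ 1)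
    (hpδ : (p:ℝ) ^ (1 - σ) ≤ 5/3) :
    ((p:ℝ) ^ (-σ)) / (1 - (p:ℝ) ^ (-σ)) ≤ 5 / p := by
  have hp0 : (0:ℝ) < p := by positivity
  have hp2 : (2:ℝ) ≤ p := by exact_mod_cast hp
  have hr0 : (0:ℝ) ≤ (p:ℝ) ^ (-σ) := Real.rpow_nonneg (by positivity) _
  have h2σ : (3:ℝ)/2 ≤ (2:ℝ) ^ σ := by
    have h1 : (1:ℝ) + σ * Real.log 2 ≤ Real.exp (σ * Real.log 2) := by
      linarith [Real.add_one_le_exp (σ * Real.log 2)]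
    have h2 : (2:ℝ) ^ σ = Real.exp (σ * Real.log 2) := by
      rw [Real.rpow_def_of_pos (by norm_num), mul_comm]
    rw [h2]
    have hl2 : (0.6931471803 : ℝ) < Real.log 2 := Real.log_two_gt_d9
    nlinarith
  have hrle : (p:ℝ) ^ (-σ) ≤ 2/3 := by
    have h1 : (p:ℝ) ^ (-σ) ≤ (2:ℝ) ^ (-σ) :=
      Real.rpow_le_rpow_of_nonpos (by norm_num) hp2 (by linarith)
    have h2 : (2:ℝ) ^ (-σ) = ((2:ℝ) ^ σ)⁻¹ := by
      rw [Real.rpow_neg (by norm_num)]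
    have h3 : ((2:ℝ) ^ σ)⁻¹ ≤ 2/3 := by
      rw [inv_le_comm₀ (by positivity) (by norm_num)]
      linarith
    linarith [h1, h2 ▸ h1]
  have hden : (1:ℝ)/3 ≤ 1 - (p:ℝ) ^ (-σ) := by linarith
  calc ((p:ℝ) ^ (-σ)) / (1 - (p:ℝ) ^ (-σ)) ≤ ((p:ℝ) ^ (-σ)) / (1/3) := by
        gcongr
    _ = 3 * ((p:ℝ) ^ (-σ)) := by ring
    _ = 3 * ((p:ℝ) ^ (1 - σ)) / p := by
        rw [show -σ = (1 - σ) + (-1) by ring, Real.rpow_add hp0, Real.rpow_neg_one]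
        field_simp
    _ ≤ 3 * (5/3) / p := by
        gcongr
    _ = 5 / p := by ring

/-- The largest prime factor of `n` (`0` if `n ≤ 1`). -/
def maxPrimeFac (n : ℕ) : ℕ := n.primeFactors.sup id

noncomputable section
namespace SmoothPsi

def A (y : ℝ) (N : ℕ) : Finset ℕ := (Icc 1 N).filter (fun n => (maxPrimeFac n : ℝ) ≤ y)

def Psi (y : ℝ) (N : ℕ) : ℕ := (A y N).card

lemma mem_A {y : ℝ} {N n : ℕ} :
    n ∈ A y N ↔ (1 ≤ n ∧ n ≤ N) ∧ (maxPrimeFac n : ℝ) ≤ y := by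
  simp [A, mem_filter, mem_Icc]

lemma Psi_le (y : ℝ) (N : ℕ) : Psi y N ≤ N := by
  have h1 : Psi y N ≤ (Icc 1 N).card := Finset.card_le_card (filter_subset _ _)
  simpa [Nat.card_Icc] using h1

lemma prime_le_y {y : ℝ} {n p : ℕ} (hs : (maxPrimeFac n : ℝ) ≤ y)
    (hp : p ∈ n.primeFactors) : (p : ℝ) ≤ y := by
  refine le_trans ?_ hs
  exact_mod_cast Nat.cast_le.mpr (Finset.le_sup (f := id) hp)

lemma smooth_div {y : ℝ} {n d : ℕ} (hs : (maxPrimeFac n : ℝ) ≤ y)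
    (hd : d ∣ n) (hn0 : n ≠ 0) : (maxPrimeFac (n / d) : ℝ) ≤ y := by
  refine le_trans ?_ hs
  have h1 : (n / d).primeFactors ⊆ n.primeFactors :=
    Nat.primeFactors_mono (Nat.div_dvd_of_dvd hd) hn0
  exact_mod_cast Nat.cast_le.mpr (Finset.sup_mono h1)

lemma card_dvd_le (y : ℝ) (N d : ℕ) (hd : 1 ≤ d) :
    ((A y N).filter (fun n => d ∣ n)).card ≤ Psi y (N / d) := by
  apply Finset.card_le_card_of_injOn (fun n => n / d)
  · intro n hn
    rw [mem_coe, mem_filter] at hn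
    obtain ⟨hnA, hdn⟩ := hn
    rw [mem_A] at hnA; rw [mem_coe, mem_A]
    obtain ⟨⟨hn1, hnN⟩, hsm⟩ := hnA
    refine ⟨⟨?_, Nat.div_le_div_right hnN⟩, smooth_div hsm hdn (by omega)⟩
    exact Nat.one_le_div_iff (by omega) |>.mpr (Nat.le_of_dvd (by omega) hdn)
  · intro a ha b hb hab
    rw [mem_coe, mem_filter] at ha hb
    have ha' := Nat.div_mul_cancel ha.2
    have hb' := Nat.div_mul_cancel hb.2
    simp only at hab
    rw [← ha', ← hb', hab]

lemma card_le_psi {y : ℝ} {N m : ℕ} (hm : m ≤ N) :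
    ((A y N).filter (fun n => n ≤ m)).card ≤ Psi y m := by
  apply Finset.card_le_card
  intro n hn
  rw [mem_filter] at hn
  rw [mem_A] at hn ⊢
  exact ⟨⟨hn.1.1.1, hn.2⟩, hn.1.2⟩

end SmoothPsi

namespace SmoothPsi

lemma psi_bound {y : ℝ} (hy : Real.exp 16 ≤ y) (N : ℕ) :
    (Psi y N : ℝ) ≤ Real.exp 20 * (N:ℝ) ^ (1 - 1/(2 * Real.log y)) := by
  have hy0 : (1:ℝ) < y := lt_of_lt_of_le (by
    calc (1:ℝ) = Real.exp 0 := Real.exp_zero.symm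
      _ < Real.exp 16 := Real.exp_lt_exp.mpr (by norm_num)) hy
  have hL : 16 ≤ Real.log y := by
    rw [← Real.log_exp 16]
    exact Real.log_le_log (Real.exp_pos _) hy
  set L := Real.log y with hLdef
  have hLpos : 0 < L := by linarith
  set δ : ℝ := 1/(2*L) with hδdef
  have hδpos : 0 < δ := by positivity
  have hδle : δ ≤ 1/32 := by
    rw [hδdef, div_le_div_iff₀ (by positivity) (by norm_num)]
    linarith
  have hσeq : 1 - 1/(2 * Real.log y) = 1 - δ := rfl
  rw [hσeq]
  set σ : ℝ := 1 - δ with hσdef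
  have hσ1 : 3/4 ≤ σ := by rw [hσdef]; linarith
  have hσlt : σ < 1 := by rw [hσdef]; linarith
  have hσ2 : σ ≤ 1 := hσlt.le
  have hσpos : 0 < σ := by linarith
  -- p^δ ≤ 5/3 for 2 ≤ p ≤ y
  have hpdelta : ∀ p : ℕ, 2 ≤ p → (p:ℝ) ≤ y → (p:ℝ) ^ (1 - σ) ≤ 5/3 := by
    intro p hp2 hpy
    have hp0 : (0:ℝ) < p := by positivity
    have h1 : (1:ℝ) - σ = δ := by rw [hσdef]; ring
    rw [h1, Real.rpow_def_of_pos hp0]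
    have h2 : Real.log p * δ ≤ 1/2 := by
      have hlp : Real.log p ≤ L := Real.log_le_log hp0 hpy
      have hlp0 : 0 ≤ Real.log p := Real.log_nonneg (by
        have : (2:ℝ) ≤ p := by exact_mod_cast hp2
        linarith)
      calc Real.log p * δ ≤ L * δ := by
            apply mul_le_mul_of_nonneg_right hlp hδpos.le
        _ = 1/2 := by rw [hδdef]; field_simp
    calc Real.exp (Real.log p * δ) ≤ Real.exp (1/2) := Real.exp_le_exp.mpr h2
      _ ≤ 5/3 := by
        have he : Real.exp (1/2) * Real.exp (1/2) = Real.exp 1 := by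
          rw [← Real.exp_add]; norm_num
        have h9 := Real.exp_one_lt_d9
        nlinarith [Real.exp_pos (1/2 : ℝ)]
  induction N using Nat.strong_induction_on with
  | _ N ih =>
  rcases Nat.eq_zero_or_pos N with h0 | hN1
  · subst h0
    have hA : A y 0 = ∅ := by
      rw [A]
      simp
    rw [Psi, hA]
    simp [Real.zero_rpow (by positivity : σ ≠ 0)]
  · -- N ≥ 1
    have hN0 : (0:ℝ) < N := by exact_mod_cast hN1
    have hNR : (1:ℝ) ≤ N := by exact_mod_cast hN1
    have hNσ1 : (1:ℝ) ≤ (N:ℝ) ^ σ := by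
      calc (1:ℝ) = (N:ℝ) ^ (0:ℝ) := (Real.rpow_zero _).symm
        _ ≤ (N:ℝ) ^ σ := Real.rpow_le_rpow_of_exponent_le hNR hσpos.le
    have hσδ : σ + δ = 1 := by rw [hσdef]; ring
    by_cases hsmall : Real.log N ≤ 40 * L
    · have h1 : (Psi y N : ℝ) ≤ N := by exact_mod_cast Psi_le y N
      have h2 : (N:ℝ) = (N:ℝ) ^ σ * (N:ℝ) ^ δ := by
        rw [← Real.rpow_add hN0, hσδ, Real.rpow_one]
      have h3 : (N:ℝ) ^ δ ≤ Real.exp 20 := by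
        rw [Real.rpow_def_of_pos hN0]
        apply Real.exp_le_exp.mpr
        calc Real.log N * δ ≤ (40 * L) * δ := by
              apply mul_le_mul_of_nonneg_right hsmall hδpos.le
          _ = 20 := by rw [hδdef]; field_simp; ring
      calc (Psi y N : ℝ) ≤ (N:ℝ) := h1
        _ = (N:ℝ) ^ σ * (N:ℝ) ^ δ := h2
        _ ≤ (N:ℝ) ^ σ * Real.exp 20 := by
            apply mul_le_mul_of_nonneg_left h3 (Real.rpow_nonneg hN0.le σ)
        _ = Real.exp 20 * (N:ℝ) ^ σ := by ring
    · push_neg at hsmall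
      set S := A y N with hSdef
      have hSsub : S ⊆ Icc 1 N := filter_subset _ _
      have hmem : ∀ n ∈ S, 1 ≤ n ∧ n ≤ N ∧ (maxPrimeFac n : ℝ) ≤ y := by
        intro n hn
        have h := mem_A.mp hn
        exact ⟨h.1.1, h.1.2, h.2⟩
      have hlogN : 0 < Real.log N := by linarith
      have hcard : (Psi y N : ℝ) * Real.log N = ∑ n ∈ S, Real.log N := by
        rw [Finset.sum_const, nsmul_eq_mul]
        rfl
      have part1 : ∑ n ∈ S, (Real.log N - Real.log n) ≤ Real.exp 20 * (3 * (N:ℝ) ^ σ) := by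
        have e1 : ∑ n ∈ S, (Real.log N - Real.log n) ≤ ∑ n ∈ S, ∑ m ∈ Ico n N, ((m:ℝ))⁻¹ := by
          apply Finset.sum_le_sum
          intro n hn
          exact log_diff_le (hmem n hn).1 N (hmem n hn).2.1
        have e2 : ∑ n ∈ S, ∑ m ∈ Ico n N, ((m:ℝ))⁻¹
            = ∑ m ∈ Ico 1 N, ((S.filter (fun n => n ≤ m)).card : ℝ) * ((m:ℝ))⁻¹ :=
          abel_swap hSsub _
        have e3 : ∑ m ∈ Ico 1 N, ((S.filter (fun n => n ≤ m)).card : ℝ) * ((m:ℝ))⁻¹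
            ≤ ∑ m ∈ Ico 1 N, Real.exp 20 * ((m:ℝ)) ^ (-δ) := by
          apply Finset.sum_le_sum
          intro m hm
          rw [mem_Ico] at hm
          have hm0 : (0:ℝ) < m := by exact_mod_cast hm.1
          have c1 : ((S.filter (fun n => n ≤ m)).card : ℝ) ≤ (Psi y m : ℝ) := by
            exact_mod_cast card_le_psi (le_of_lt hm.2)
          have c2 : (Psi y m : ℝ) ≤ Real.exp 20 * (m:ℝ) ^ σ := ih m hm.2
          have c3 : (m:ℝ)^σ * (m:ℝ)⁻¹ = (m:ℝ)^(-δ) := by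
            rw [← Real.rpow_neg_one (m:ℝ), ← Real.rpow_add hm0]
            congr 1
            rw [hσdef]; ring
          calc ((S.filter (fun n => n ≤ m)).card : ℝ) * ((m:ℝ))⁻¹
              ≤ (Real.exp 20 * (m:ℝ)^σ) * ((m:ℝ))⁻¹ := by
                apply mul_le_mul_of_nonneg_right (le_trans c1 c2) (by positivity)
            _ = Real.exp 20 * ((m:ℝ)^σ * (m:ℝ)⁻¹) := by ring
            _ = Real.exp 20 * (m:ℝ)^(-δ) := by rw [c3]
        have e4 : ∑ m ∈ Ico 1 N, Real.exp 20 * ((m:ℝ)) ^ (-δ)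
            ≤ Real.exp 20 * (3 * (N:ℝ)^σ) := by
          rw [← Finset.mul_sum]
          apply mul_le_mul_of_nonneg_left _ (Real.exp_nonneg _)
          have s1 : ∑ m ∈ Ico 1 N, ((m:ℝ)) ^ (-δ) ≤ ∑ m ∈ Icc 1 N, ((m:ℝ)) ^ (-δ) := by
            apply Finset.sum_le_sum_of_subset_of_nonneg
            · intro m hm
              rw [mem_Ico] at hm
              rw [mem_Icc]
              omega
            · intro m hm _
              rw [mem_Icc] at hm
              have : (0:ℝ) < m := by exact_mod_cast hm.1
              positivity
          have s2 := sum_rpow_le hδpos (by linarith : δ < 1) N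
          have s3 : (N:ℝ)^(1-δ)/(1-δ) ≤ 2 * (N:ℝ)^σ := by
            rw [← hσdef, div_le_iff₀ (by linarith : (0:ℝ) < σ)]
            nlinarith [hNσ1]
          linarith [s1, s2, s3, hNσ1]
        calc ∑ n ∈ S, (Real.log N - Real.log n)
            ≤ ∑ n ∈ S, ∑ m ∈ Ico n N, ((m:ℝ))⁻¹ := e1
          _ = ∑ m ∈ Ico 1 N, ((S.filter (fun n => n ≤ m)).card : ℝ) * ((m:ℝ))⁻¹ := e2
          _ ≤ ∑ m ∈ Ico 1 N, Real.exp 20 * ((m:ℝ)) ^ (-δ) := e3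
          _ ≤ Real.exp 20 * (3 * (N:ℝ)^σ) := e4
      have hfloor1 : 1 ≤ ⌊y⌋₊ := Nat.le_floor (by exact_mod_cast hy0.le)
      set Y := ⌊y⌋₊ with hYdef
      set PB := (Y+1).primesBelow with hPBdef
      have hPB : ∀ p ∈ PB, p.Prime ∧ (p:ℝ) ≤ y := by
        intro p hp
        refine ⟨Nat.prime_of_mem_primesBelow hp, ?_⟩
        have h1 : p < Y + 1 := Nat.lt_of_mem_primesBelow hp
        have h2 : (p:ℝ) ≤ (Y:ℝ) := by exact_mod_cast Nat.lt_succ_iff.mp h1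
        exact le_trans h2 (Nat.floor_le (by linarith))
      have ea : ∀ n ∈ S, Real.log n = ∑ p ∈ PB, (n.factorization p : ℝ) * Real.log p := by
        intro n hn
        obtain ⟨hn1, hnN, hsm⟩ := hmem n hn
        rw [log_eq_sum (by omega : n ≠ 0)]
        apply Finset.sum_subset
        · intro p hp
          have hple : (p:ℝ) ≤ y := prime_le_y hsm hp
          have hprime := Nat.prime_of_mem_primeFactors hp
          rw [hPBdef, Nat.mem_primesBelow]
          have hpY : p ≤ Y := Nat.le_floor hple
          exact ⟨by omega, hprime⟩
        · intro p _ hnp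
          have h0 : n.factorization p = 0 := by
            rw [← Nat.support_factorization] at hnp
            exact Finsupp.notMem_support_iff.mp hnp
          rw [h0]
          simp
      have part2 : ∑ n ∈ S, Real.log n ≤ Real.exp 20 * (N:ℝ)^σ * (21 * L) := by
        have kp : ∀ p ∈ PB, ∑ n ∈ S, (n.factorization p : ℝ) * Real.log p
            ≤ Real.exp 20 * (N:ℝ)^σ * (5 * (Real.log p / p)) := by
          intro p hp
          obtain ⟨hprime, hpy⟩ := hPB p hp
          have hp2 := hprime.two_le
          have hppos : (0:ℝ) < p := by
            have : (2:ℝ) ≤ p := by exact_mod_cast hp2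
            linarith
          have hlogp : 0 ≤ Real.log p := Real.log_nonneg (by
            have : (2:ℝ) ≤ p := by exact_mod_cast hp2
            linarith)
          have goal2 : ∑ n ∈ S, (n.factorization p : ℝ) ≤ Real.exp 20 * (N:ℝ)^σ * (5/(p:ℝ)) := by
            have d1 : ∑ n ∈ S, n.factorization p ≤ ∑ ν ∈ Icc 1 N, Psi y (N / p^ν) := by
              calc ∑ n ∈ S, n.factorization p
                  ≤ ∑ n ∈ S, ((Icc 1 N).filter (fun ν => p ^ ν ∣ n)).card := by
                    apply Finset.sum_le_sum
                    intro n hn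
                    exact factorization_le_card hprime (hmem n hn).1 (hmem n hn).2.1
                _ = ∑ ν ∈ Icc 1 N, (S.filter (fun n => p ^ ν ∣ n)).card :=
                    sum_card_swap (fun ν n => p ^ ν ∣ n)
                _ ≤ ∑ ν ∈ Icc 1 N, Psi y (N / p^ν) := by
                    apply Finset.sum_le_sum
                    intro ν _
                    exact card_dvd_le y N (p^ν) (Nat.one_le_pow _ _ (by omega))
            have d1' : ∑ n ∈ S, (n.factorization p : ℝ) ≤ ∑ ν ∈ Icc 1 N, (Psi y (N / p^ν) : ℝ) := by
              exact_mod_cast d1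
            have d2 : ∀ ν ∈ Icc 1 N, (Psi y (N / p^ν):ℝ)
                ≤ Real.exp 20 * ((N:ℝ)^σ * ((p:ℝ)^(-σ))^ν) := by
              intro ν hν
              rw [mem_Icc] at hν
              have hplt : 1 < p ^ ν := by
                calc 1 < p := hprime.one_lt
                  _ ≤ p ^ ν := Nat.le_self_pow (by omega) p
              have hdiv_lt : N / p^ν < N := Nat.div_lt_self hN1 hplt
              have hI := ih _ hdiv_lt
              have hc : ((N / p^ν : ℕ):ℝ) ≤ (N:ℝ) / ((p:ℝ)^ν) := by
                have h := Nat.cast_div_le (m := N) (n := p^ν) (α := ℝ)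
                push_cast at h
                exact_mod_cast h
              have hr : ((N / p^ν : ℕ):ℝ)^σ ≤ ((N:ℝ) / ((p:ℝ)^ν))^σ :=
                Real.rpow_le_rpow (by positivity) hc hσpos.le
              have hps : (((p:ℝ)^ν : ℝ))^σ = ((p:ℝ)^σ)^ν := by
                rw [← Real.rpow_natCast (p:ℝ) ν, ← Real.rpow_mul hppos.le, mul_comm,
                  Real.rpow_mul hppos.le, Real.rpow_natCast]
              have hsplit : ((N:ℝ) / ((p:ℝ)^ν))^σ = (N:ℝ)^σ * ((p:ℝ)^(-σ))^ν := by
                rw [Real.div_rpow hN0.le (by positivity), hps, div_eq_mul_inv, ← inv_pow,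
                  ← Real.rpow_neg hppos.le]
              calc (Psi y (N / p^ν):ℝ) ≤ Real.exp 20 * ((N / p^ν : ℕ):ℝ)^σ := hI
                _ ≤ Real.exp 20 * ((N:ℝ) / ((p:ℝ)^ν))^σ := by
                    apply mul_le_mul_of_nonneg_left hr (Real.exp_nonneg _)
                _ = Real.exp 20 * ((N:ℝ)^σ * ((p:ℝ)^(-σ))^ν) := by rw [hsplit]
            have hr0 : (0:ℝ) ≤ (p:ℝ)^(-σ) := Real.rpow_nonneg hppos.le _
            have hr1 : (p:ℝ)^(-σ) < 1 :=
              Real.rpow_lt_one_of_one_lt_of_neg (by exact_mod_cast hprime.one_lt) (by linarith)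
            have hgeo := geom_Icc_le hr0 hr1 N
            have hrb := r_bound hp2 hσ1 hσ2 (hpdelta p hp2 hpy)
            calc ∑ n ∈ S, (n.factorization p : ℝ)
                ≤ ∑ ν ∈ Icc 1 N, (Psi y (N / p^ν) : ℝ) := d1'
              _ ≤ ∑ ν ∈ Icc 1 N, Real.exp 20 * ((N:ℝ)^σ * ((p:ℝ)^(-σ))^ν) :=
                  Finset.sum_le_sum d2
              _ = Real.exp 20 * ((N:ℝ)^σ * ∑ ν ∈ Icc 1 N, ((p:ℝ)^(-σ))^ν) := by
                  rw [← Finset.mul_sum, ← Finset.mul_sum]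
              _ ≤ Real.exp 20 * ((N:ℝ)^σ * (5/(p:ℝ))) := by
                  apply mul_le_mul_of_nonneg_left _ (Real.exp_nonneg _)
                  apply mul_le_mul_of_nonneg_left _ (Real.rpow_nonneg hN0.le _)
                  linarith
              _ = Real.exp 20 * (N:ℝ)^σ * (5/(p:ℝ)) := by ring
          calc ∑ n ∈ S, (n.factorization p : ℝ) * Real.log p
              = (∑ n ∈ S, (n.factorization p : ℝ)) * Real.log p := by rw [← Finset.sum_mul]
            _ ≤ (Real.exp 20 * (N:ℝ)^σ * (5/(p:ℝ))) * Real.log p := by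
                apply mul_le_mul_of_nonneg_right goal2 hlogp
            _ = Real.exp 20 * (N:ℝ)^σ * (5 * (Real.log p / p)) := by ring
        calc ∑ n ∈ S, Real.log n
            = ∑ n ∈ S, ∑ p ∈ PB, (n.factorization p : ℝ) * Real.log p :=
              Finset.sum_congr rfl ea
          _ = ∑ p ∈ PB, ∑ n ∈ S, (n.factorization p : ℝ) * Real.log p := Finset.sum_comm
          _ ≤ ∑ p ∈ PB, Real.exp 20 * (N:ℝ)^σ * (5 * (Real.log p / p)) :=
              Finset.sum_le_sum kp
          _ = Real.exp 20 * (N:ℝ)^σ * (5 * ∑ p ∈ PB, Real.log p / p) := by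
              rw [← Finset.mul_sum, ← Finset.mul_sum]
          _ ≤ Real.exp 20 * (N:ℝ)^σ * (5 * (4 * L + 4 * Real.log 2)) := by
              have hmert := mertens hfloor1
              rw [← hPBdef] at hmert
              have hYy : (Y:ℝ) ≤ y := Nat.floor_le (by linarith)
              have hY0 : (0:ℝ) < Y := by exact_mod_cast hfloor1
              have hlogY : Real.log Y ≤ L := Real.log_le_log hY0 hYy
              have h5 : ∑ p ∈ PB, Real.log p / p ≤ 4 * L + 4 * Real.log 2 := by
                linarith
              apply mul_le_mul_of_nonneg_left _ (by positivity)
              linarith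
          _ ≤ Real.exp 20 * (N:ℝ)^σ * (21 * L) := by
              apply mul_le_mul_of_nonneg_left _ (by positivity)
              have hlog2 : Real.log 2 < 0.6931471808 := Real.log_two_lt_d9
              linarith
      have hsum : ∑ n ∈ S, Real.log N
          = ∑ n ∈ S, (Real.log N - Real.log n) + ∑ n ∈ S, Real.log n := by
        rw [← Finset.sum_add_distrib]
        apply Finset.sum_congr rfl
        intro n _
        ring
      have hfinal : (Psi y N : ℝ) * Real.log N ≤ (Real.exp 20 * (N:ℝ)^σ) * Real.log N := by
        rw [hcard, hsum]
        calc ∑ n ∈ S, (Real.log N - Real.log n) + ∑ n ∈ S, Real.log n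
            ≤ Real.exp 20 * (3*(N:ℝ)^σ) + Real.exp 20 * (N:ℝ)^σ * (21*L) :=
              add_le_add part1 part2
          _ = Real.exp 20 * (N:ℝ)^σ * (3 + 21*L) := by ring
          _ ≤ (Real.exp 20 * (N:ℝ)^σ) * Real.log N := by
              apply mul_le_mul_of_nonneg_left _ (by positivity)
              linarith
      exact le_of_mul_le_mul_right hfinal hlogN

end SmoothPsi

lemma rpow_neg_telescope {β : ℝ} (hβ0 : 0 ≤ β) {n : ℕ} (hn : 1 ≤ n) : ∀ N, n ≤ N →
    (n:ℝ)^(-β) ≤ (N:ℝ)^(-β) + ∑ m ∈ Ico n N, β * (m:ℝ)^(-(1+β)) := by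
  intro N hN
  induction N, hN using Nat.le_induction with
  | base => simp
  | succ N hb ih =>
    rw [Finset.sum_Ico_succ_top hb]
    have hN1 : (1:ℝ) ≤ (N:ℝ) := by exact_mod_cast le_trans hn hb
    have hF := F2 hβ0 hN1
    have hcast : ((N+1:ℕ):ℝ) = (N:ℝ) + 1 := by push_cast; ring
    rw [hcast]
    linarith

set_option maxHeartbeats 1000000 in
/-- For `0 ≤ β < 1` there are constants `C_β, y_β, c_β` such that for all reals
`x, y` with `y ≥ y_β` and `y ≤ c_β x`,
`Σ_{n ≤ x, P⁺(n) ≤ y} n^{-β} ≤ C_β x^{1-β} e^{-(1/2) log x / log y}`. -/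
theorem smooth_sum_bound (β : ℝ) (hβ0 : 0 ≤ β) (hβ1 : β < 1) :
    ∃ C y₀ c : ℝ, 0 < C ∧ 0 < y₀ ∧ 0 < c ∧ ∀ x y : ℝ, y₀ ≤ y → y ≤ c * x →
      ∑ n ∈ (Icc 1 ⌊x⌋₊).filter (fun n => (maxPrimeFac n : ℝ) ≤ y), (n : ℝ) ^ (-β) ≤
        C * x ^ (1 - β) * Real.exp (-(1 / 2) * (Real.log x / Real.log y)) := by
  have h1β : (0:ℝ) < 1 - β := by linarith
  refine ⟨Real.exp 20 * (4/(1-β)), Real.exp (16 + 1/(1-β)), 1, by positivity,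
    Real.exp_pos _, one_pos, ?_⟩
  intro x y hyy hyx
  rw [one_mul] at hyx
  have hinv : 0 < 1/(1-β) := by positivity
  have hy16 : Real.exp 16 ≤ y := le_trans (Real.exp_le_exp.mpr (by linarith)) hyy
  have hy1 : (1:ℝ) < y := by
    calc (1:ℝ) = Real.exp 0 := Real.exp_zero.symm
      _ < Real.exp 16 := Real.exp_lt_exp.mpr (by norm_num)
      _ ≤ y := hy16
  have hx1 : (1:ℝ) < x := lt_of_lt_of_le hy1 hyx
  have hx0 : (0:ℝ) < x := by linarith
  set L := Real.log y with hLdef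
  have hL16 : 16 ≤ L := by
    rw [hLdef, ← Real.log_exp 16]
    exact Real.log_le_log (Real.exp_pos _) hy16
  have hLβ : 1/(1-β) ≤ L := by
    have h := Real.log_le_log (Real.exp_pos _) hyy
    rw [Real.log_exp] at h
    rw [hLdef]
    linarith
  set δ : ℝ := 1/(2*L) with hδdef
  have hLpos : (0:ℝ) < L := by linarith
  have hδpos : 0 < δ := by positivity
  have hδβ : δ ≤ (1-β)/2 := by
    rw [hδdef, div_le_div_iff₀ (by positivity) (by norm_num)]
    have h2 : (1:ℝ) ≤ (1-β) * L := by
      rw [← div_le_iff₀' h1β]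
      exact hLβ
    nlinarith
  set σ : ℝ := 1 - δ with hσdef
  have hσβ : β ≤ σ := by rw [hσdef]; linarith
  set N := ⌊x⌋₊ with hNdef
  have hN1 : 1 ≤ N := Nat.le_floor (by exact_mod_cast hx1.le)
  have hNx : (N:ℝ) ≤ x := Nat.floor_le hx0.le
  have hN0 : (0:ℝ) < N := by exact_mod_cast hN1
  have hNR : (1:ℝ) ≤ (N:ℝ) := by exact_mod_cast hN1
  have hNσβ1 : (1:ℝ) ≤ (N:ℝ)^(σ - β) := by
    calc (1:ℝ) = (N:ℝ) ^ (0:ℝ) := (Real.rpow_zero _).symm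
      _ ≤ (N:ℝ) ^ (σ - β) := Real.rpow_le_rpow_of_exponent_le hNR (by linarith)
  have hset : (Icc 1 N).filter (fun n => (maxPrimeFac n : ℝ) ≤ y) = SmoothPsi.A y N := rfl
  rw [hset]
  set S := SmoothPsi.A y N with hSdef
  have hSsub : S ⊆ Icc 1 N := filter_subset _ _
  have hmem : ∀ n ∈ S, 1 ≤ n ∧ n ≤ N := fun n hn => mem_Icc.mp (hSsub hn)
  have hpsi : ∀ m : ℕ, (SmoothPsi.Psi y m : ℝ) ≤ Real.exp 20 * (m:ℝ)^σ := by
    intro m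
    have h := SmoothPsi.psi_bound hy16 m
    rw [← hLdef] at h
    have he : 1 - 1/(2*L) = σ := by rw [hσdef, hδdef]
    rw [he] at h
    exact h
  have step1 : ∑ n ∈ S, (n:ℝ)^(-β) ≤ (S.card : ℝ) * (N:ℝ)^(-β)
      + ∑ m ∈ Ico 1 N, ((S.filter (fun n => n ≤ m)).card : ℝ) * (β * (m:ℝ)^(-(1+β))) := by
    calc ∑ n ∈ S, (n:ℝ)^(-β)
        ≤ ∑ n ∈ S, ((N:ℝ)^(-β) + ∑ m ∈ Ico n N, β * (m:ℝ)^(-(1+β))) := by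
          apply Finset.sum_le_sum
          intro n hn
          exact rpow_neg_telescope hβ0 (hmem n hn).1 N (hmem n hn).2
      _ = (S.card : ℝ) * (N:ℝ)^(-β) + ∑ n ∈ S, ∑ m ∈ Ico n N, β * (m:ℝ)^(-(1+β)) := by
          rw [Finset.sum_add_distrib, Finset.sum_const, nsmul_eq_mul]
      _ = _ := by rw [abel_swap hSsub]
  have t1 : (S.card : ℝ) * (N:ℝ)^(-β) ≤ Real.exp 20 * (N:ℝ)^(σ - β) := by
    have hps := hpsi N
    have hcards : (S.card : ℝ) = (SmoothPsi.Psi y N : ℝ) := rfl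
    have hmul : (N:ℝ)^σ * (N:ℝ)^(-β) = (N:ℝ)^(σ-β) := by
      rw [← Real.rpow_add hN0]
      ring_nf
    calc (S.card : ℝ) * (N:ℝ)^(-β) ≤ (Real.exp 20 * (N:ℝ)^σ) * (N:ℝ)^(-β) := by
          rw [hcards]
          apply mul_le_mul_of_nonneg_right hps (Real.rpow_nonneg hN0.le _)
      _ = Real.exp 20 * ((N:ℝ)^σ * (N:ℝ)^(-β)) := by ring
      _ = Real.exp 20 * (N:ℝ)^(σ-β) := by rw [hmul]
  have t2 : ∑ m ∈ Ico 1 N, ((S.filter (fun n => n ≤ m)).card : ℝ) * (β * (m:ℝ)^(-(1+β)))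
      ≤ Real.exp 20 * (β * (1 + 2/(1-β) * (N:ℝ)^(σ - β))) := by
    have hs0 : 0 < β + δ := by positivity
    have hs1 : β + δ < 1 := by linarith
    calc ∑ m ∈ Ico 1 N, ((S.filter (fun n => n ≤ m)).card : ℝ) * (β * (m:ℝ)^(-(1+β)))
        ≤ ∑ m ∈ Ico 1 N, Real.exp 20 * (β * (m:ℝ)^(-(β+δ))) := by
          apply Finset.sum_le_sum
          intro m hm
          rw [mem_Ico] at hm
          have hm0 : (0:ℝ) < m := by exact_mod_cast hm.1
          have c1 : ((S.filter (fun n => n ≤ m)).card : ℝ) ≤ (SmoothPsi.Psi y m : ℝ) := by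
            exact_mod_cast SmoothPsi.card_le_psi (le_of_lt hm.2)
          have c2 := hpsi m
          have c3 : (m:ℝ)^σ * (m:ℝ)^(-(1+β)) = (m:ℝ)^(-(β+δ)) := by
            rw [← Real.rpow_add hm0]
            congr 1
            rw [hσdef]
            ring
          have hterm : (0:ℝ) ≤ β * (m:ℝ)^(-(1+β)) := by positivity
          calc ((S.filter (fun n => n ≤ m)).card : ℝ) * (β * (m:ℝ)^(-(1+β)))
              ≤ (Real.exp 20 * (m:ℝ)^σ) * (β * (m:ℝ)^(-(1+β))) :=
                mul_le_mul_of_nonneg_right (le_trans c1 c2) hterm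
            _ = Real.exp 20 * (β * ((m:ℝ)^σ * (m:ℝ)^(-(1+β)))) := by ring
            _ = Real.exp 20 * (β * (m:ℝ)^(-(β+δ))) := by rw [c3]
      _ = Real.exp 20 * (β * ∑ m ∈ Ico 1 N, (m:ℝ)^(-(β+δ))) := by
          rw [← Finset.mul_sum, ← Finset.mul_sum]
      _ ≤ Real.exp 20 * (β * (1 + 2/(1-β) * (N:ℝ)^(σ - β))) := by
          apply mul_le_mul_of_nonneg_left _ (Real.exp_nonneg _)
          apply mul_le_mul_of_nonneg_left _ hβ0
          have s1 : ∑ m ∈ Ico 1 N, ((m:ℝ)) ^ (-(β+δ)) ≤ ∑ m ∈ Icc 1 N, ((m:ℝ)) ^ (-(β+δ)) := by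
            apply Finset.sum_le_sum_of_subset_of_nonneg
            · intro m hm
              rw [mem_Ico] at hm
              rw [mem_Icc]
              omega
            · intro m hm _
              rw [mem_Icc] at hm
              have : (0:ℝ) < m := by exact_mod_cast hm.1
              positivity
          have s2 := sum_rpow_le hs0 hs1 N
          have s3 : (N:ℝ)^(1-(β+δ))/(1-(β+δ)) ≤ 2/(1-β) * (N:ℝ)^(σ-β) := by
            have he2 : (1:ℝ) - (β+δ) = σ - β := by rw [hσdef]; ring
            rw [he2]
            rw [div_le_iff₀ (by linarith : (0:ℝ) < σ - β)]
            have hNpos : (0:ℝ) < (N:ℝ)^(σ-β) := by positivity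
            have key : 1 ≤ 2/(1-β) * (σ-β) := by
              rw [div_mul_eq_mul_div, le_div_iff₀ h1β, hσdef]
              linarith
            nlinarith [hNpos, key]
          linarith
  have hfrac : (N:ℝ)^(σ-β) + β * (1 + 2/(1-β) * (N:ℝ)^(σ-β)) ≤ 4/(1-β) * (N:ℝ)^(σ-β) := by
    have hW := hNσβ1
    have h4 : 4/(1-β) * (N:ℝ)^(σ-β) * (1-β) = 4 * (N:ℝ)^(σ-β) := by field_simp
    have h2 : 2/(1-β) * (N:ℝ)^(σ-β) * (1-β) = 2 * (N:ℝ)^(σ-β) := by field_simp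
    nlinarith [hW, hβ0, hβ1, h4, h2, h1β]
  have hcomb : ∑ n ∈ S, (n:ℝ)^(-β) ≤ Real.exp 20 * (4/(1-β)) * (N:ℝ)^(σ-β) := by
    calc ∑ n ∈ S, (n:ℝ)^(-β)
        ≤ Real.exp 20 * (N:ℝ)^(σ-β) + Real.exp 20 * (β * (1 + 2/(1-β) * (N:ℝ)^(σ - β))) := by
          linarith [step1, t1, t2]
      _ = Real.exp 20 * ((N:ℝ)^(σ-β) + β * (1 + 2/(1-β) * (N:ℝ)^(σ - β))) := by ring
      _ ≤ Real.exp 20 * (4/(1-β) * (N:ℝ)^(σ-β)) :=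
          mul_le_mul_of_nonneg_left hfrac (Real.exp_nonneg _)
      _ = Real.exp 20 * (4/(1-β)) * (N:ℝ)^(σ-β) := by ring
  have hx2 : (N:ℝ)^(σ-β) ≤ x^(σ-β) := Real.rpow_le_rpow hN0.le hNx (by linarith)
  have hxeq : x^(σ-β) = x^(1-β) * Real.exp (-(1/2) * (Real.log x / L)) := by
    rw [show σ - β = (1-β) + (-δ) by rw [hσdef]; ring, Real.rpow_add hx0]
    congr 1
    rw [Real.rpow_def_of_pos hx0]
    congr 1
    rw [hδdef]
    field_simp
  calc ∑ n ∈ S, (n:ℝ)^(-β) ≤ Real.exp 20 * (4/(1-β)) * (N:ℝ)^(σ-β) := hcomb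
    _ ≤ Real.exp 20 * (4/(1-β)) * x^(σ-β) := by
        apply mul_le_mul_of_nonneg_left hx2 (by positivity)
    _ = Real.exp 20 * (4/(1-β)) * x^(1-β) * Real.exp (-(1/2) * (Real.log x / L)) := by
        rw [hxeq]
        ring
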